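/- Let m, n ≥ 2 be integers and k ∈ (0,1) with k² ≤ min{(m-1), (n-1)}/(m+n+1). Let a₁ = k, a₂ = δ₁, b₁ = R₁(1-ε-k), b₂ = δ - R₁δ₁, where R₁ = 100, ε ∈ (0,1/100], 0 < δ₁ < δ, δ - R₁δ₁ > 0, and δ₁ ≤ δ₁₀ for some δ₁₀ > 0 depending on m, n, δ. Then all four Ricci curvatures of the metric dr² + (a₁r+b₁)²g_{S^m} + (a₂r+b₂)²g_{S^n} + (a₂r+b₂)²g_{S^2} are nonnegative for all r > 0; specifically: Ric₀₀ = 0; Ric₁₁ ≥ 0 since (m-1) - (m+n+1)a₁² ≥ 0 and (m-1)b₂ ≥ [(m-1)a₁b₂ + (n+2)a₂b₁]a₁ when δ₁ is small; Ric₂₂ ≥ 0 and Ric₃₃ ≥ 0 similarly. -/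

import Mathlib

noncomputable section
open Set

/-- Radial Ricci curvature of the triple warped product
`dr² + φ(r)²g_{S^m} + ψ(r)²g_{S^n} + ρ(r)²g_{S^2}`. -/
def Ric00 (m n : ℕ) (φ ψ ρ : ℝ → ℝ) (r : ℝ) : ℝ :=
  -((m : ℝ) * deriv (deriv φ) r / φ r + (n : ℝ) * deriv (deriv ψ) r / ψ r +
    2 * deriv (deriv ρ) r / ρ r)

/-- Ricci curvature in the `S^m` direction. -/
def Ric11 (m n : ℕ) (φ ψ ρ : ℝ → ℝ) (r : ℝ) : ℝ :=
  -(deriv (deriv φ) r) / φ r + ((m : ℝ) - 1) * (1 - (deriv φ r) ^ 2) / (φ r) ^ 2 -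
    (n : ℝ) * (deriv φ r * deriv ψ r) / (φ r * ψ r) -
    2 * (deriv φ r * deriv ρ r) / (φ r * ρ r)

/-- Ricci curvature in the `S^n` direction. -/
def Ric22 (m n : ℕ) (φ ψ ρ : ℝ → ℝ) (r : ℝ) : ℝ :=
  -(deriv (deriv ψ) r) / ψ r + ((n : ℝ) - 1) * (1 - (deriv ψ r) ^ 2) / (ψ r) ^ 2 -
    (m : ℝ) * (deriv φ r * deriv ψ r) / (φ r * ψ r) -
    2 * (deriv ψ r * deriv ρ r) / (ψ r * ρ r)

/-- Ricci curvature in the `S^2` direction. -/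
def Ric33 (m n : ℕ) (φ ψ ρ : ℝ → ℝ) (r : ℝ) : ℝ :=
  -(deriv (deriv ρ) r) / ρ r + (1 - (deriv ρ r) ^ 2) / (ρ r) ^ 2 -
    (m : ℝ) * (deriv φ r * deriv ρ r) / (φ r * ρ r) -
    (n : ℝ) * (deriv ψ r * deriv ρ r) / (ψ r * ρ r)

lemma deriv_affine (a b : ℝ) : deriv (fun t : ℝ => a * t + b) = fun _ => a := by
  funext x
  have h : HasDerivAt (fun t : ℝ => a * t + b) a x := by
    simpa using ((hasDerivAt_id x).const_mul a).add_const b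
  exact h.deriv

lemma deriv2_affine (a b : ℝ) :
    deriv (deriv (fun t : ℝ => a * t + b)) = fun _ => (0:ℝ) := by
  rw [deriv_affine]
  funext x
  simp

set_option maxHeartbeats 2000000 in
/-- the affine triple warped product
`dr² + (kr+b₁)²g_{S^m} + (δ₁r+b₂)²g_{S^n} + (δ₁r+b₂)²g_{S^2}` with `b₁ = 100(1-ε-k)`,
`b₂ = δ - 100δ₁`, has nonnegative Ricci curvature (and `Ric₀₀ = 0`) for all `r > 0`
provided `δ₁` is small enough depending on m, n, δ. -/
theorem stmt19 (m n : ℕ) (hm : 2 ≤ m) (hn : 2 ≤ n) (k ε δ : ℝ)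
    (hk : 0 < k ∧ k < 1)
    (hk2 : k ^ 2 ≤ min ((m : ℝ) - 1) ((n : ℝ) - 1) / ((m : ℝ) + n + 1))
    (hε : 0 < ε ∧ ε ≤ 1 / 100) (hkε : k < 1 - ε) (hδ : 0 < δ) :
    ∃ δ₁₀ > (0:ℝ), ∀ δ₁ : ℝ, 0 < δ₁ → δ₁ ≤ δ₁₀ → δ₁ < δ → 0 < δ - 100 * δ₁ →
      ∀ r > (0:ℝ),
        Ric00 m n (fun t => k * t + 100 * (1 - ε - k))
          (fun t => δ₁ * t + (δ - 100 * δ₁)) (fun t => δ₁ * t + (δ - 100 * δ₁)) r = 0 ∧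
        0 ≤ Ric11 m n (fun t => k * t + 100 * (1 - ε - k))
          (fun t => δ₁ * t + (δ - 100 * δ₁)) (fun t => δ₁ * t + (δ - 100 * δ₁)) r ∧
        0 ≤ Ric22 m n (fun t => k * t + 100 * (1 - ε - k))
          (fun t => δ₁ * t + (δ - 100 * δ₁)) (fun t => δ₁ * t + (δ - 100 * δ₁)) r ∧
        0 ≤ Ric33 m n (fun t => k * t + 100 * (1 - ε - k))
          (fun t => δ₁ * t + (δ - 100 * δ₁)) (fun t => δ₁ * t + (δ - 100 * δ₁)) r := by
  obtain ⟨hk0, hk1⟩ := hk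
  obtain ⟨hε0, hε1⟩ := hε
  have hmR : (2:ℝ) ≤ (m:ℝ) := by exact_mod_cast hm
  have hnR : (2:ℝ) ≤ (n:ℝ) := by exact_mod_cast hn
  have hb₁ : 0 < 100 * (1 - ε - k) := by linarith
  have hden : (0:ℝ) < (m:ℝ) + n + 1 := by linarith
  have hk2m : ((m:ℝ) + n + 1) * k ^ 2 ≤ (m:ℝ) - 1 := by
    have h := (le_div_iff₀ hden).mp hk2
    have := min_le_left ((m:ℝ) - 1) ((n:ℝ) - 1)
    linarith
  have hkk : k ^ 2 < 1 := by nlinarith [sq_nonneg (1 - k)]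
  have hcoef1 : ((n:ℝ) + 2) * k ^ 2 ≤ ((m:ℝ) - 1) * (1 - k ^ 2) := by nlinarith [hk2m]
  have hA : (0:ℝ) ≤ ((m:ℝ) - 1) * (1 - k ^ 2) := le_trans (by positivity) hcoef1
  -- the threshold
  refine ⟨min (min (δ / 200) (1 / (2 * ((m:ℝ) + n + 1))))
      (min (((m:ℝ) - 1) * (1 - k ^ 2) * δ / (400 * (((n:ℝ) + 2) * k * (100 * (1 - ε - k))) + 1))
        ((100 * (1 - ε - k)) / (4 * (m:ℝ) * δ))), ?_, ?_⟩
  · have pY : (0:ℝ) < ((n:ℝ) + 2) * k * (100 * (1 - ε - k)) :=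
      mul_pos (mul_pos (by linarith) hk0) hb₁
    have pD : (0:ℝ) < 400 * (((n:ℝ) + 2) * k * (100 * (1 - ε - k))) + 1 := by linarith
    have pX : (0:ℝ) < ((m:ℝ) - 1) * (1 - k ^ 2) * δ :=
      mul_pos (mul_pos (by linarith) (by linarith)) hδ
    have p3 : (0:ℝ) < ((m:ℝ) - 1) * (1 - k ^ 2) * δ /
        (400 * (((n:ℝ) + 2) * k * (100 * (1 - ε - k))) + 1) := div_pos pX pD
    have p4 : (0:ℝ) < (100 * (1 - ε - k)) / (4 * (m:ℝ) * δ) := by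
      apply div_pos hb₁
      have : (0:ℝ) < (m:ℝ) := by linarith
      positivity
    have p1 : (0:ℝ) < δ / 200 := by linarith
    have p2 : (0:ℝ) < 1 / (2 * ((m:ℝ) + n + 1)) := by positivity
    exact lt_min (lt_min p1 p2) (lt_min p3 p4)
  intro δ₁ hδ₁0 hδ₁le hδ₁δ hb₂ r hr
  have h1 : δ₁ ≤ δ / 200 := le_trans hδ₁le (le_trans (min_le_left _ _) (min_le_left _ _))
  have h2 : δ₁ ≤ 1 / (2 * ((m:ℝ) + n + 1)) :=
    le_trans hδ₁le (le_trans (min_le_left _ _) (min_le_right _ _))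
  have h3 : δ₁ ≤ ((m:ℝ) - 1) * (1 - k ^ 2) * δ /
      (400 * (((n:ℝ) + 2) * k * (100 * (1 - ε - k))) + 1) :=
    le_trans hδ₁le (le_trans (min_le_right _ _) (min_le_left _ _))
  have h4 : δ₁ ≤ (100 * (1 - ε - k)) / (4 * (m:ℝ) * δ) :=
    le_trans hδ₁le (le_trans (min_le_right _ _) (min_le_right _ _))
  -- derived bounds
  have hb2' : δ / 2 ≤ δ - 100 * δ₁ := by linarith
  have h2' : δ₁ * (2 * ((m:ℝ) + n + 1)) ≤ 1 := (le_div_iff₀ (by linarith)).mp h2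
  have haux : 0 ≤ δ₁ * (2 * ((m:ℝ) + n + 1) - 10) := mul_nonneg hδ₁0.le (by linarith)
  have hδ₁1 : δ₁ ≤ 1 := by nlinarith [haux, h2']
  have hsq' : δ₁ ^ 2 ≤ δ₁ := by
    have := mul_nonneg hδ₁0.le (sub_nonneg.2 hδ₁1)
    nlinarith [this]
  have hsq : ((m:ℝ) + n + 1) * δ₁ ^ 2 ≤ 1 / 2 := by
    have := mul_le_mul_of_nonneg_left hsq' hden.le
    linarith
  have pY : (0:ℝ) < ((n:ℝ) + 2) * k * (100 * (1 - ε - k)) :=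
    mul_pos (mul_pos (by linarith) hk0) hb₁
  have pD : (0:ℝ) < 400 * (((n:ℝ) + 2) * k * (100 * (1 - ε - k))) + 1 := by linarith
  have h3' : ((n:ℝ) + 2) * k * (100 * (1 - ε - k)) * δ₁ ≤
      ((m:ℝ) - 1) * (1 - k ^ 2) * δ / 400 := by
    have := (le_div_iff₀ pD).mp h3
    linarith
  have h4' : (m:ℝ) * δ₁ * δ ≤ (100 * (1 - ε - k)) / 4 := by
    have h4m : (0:ℝ) < 4 * (m:ℝ) * δ := by
      have : (0:ℝ) < (m:ℝ) := by linarith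
      positivity
    have := (le_div_iff₀ h4m).mp h4
    linarith
  clear hk2 h1 h2 h3 h4 hδ₁le h2' haux hδ₁δ hε1 hm hn
  set b₁ : ℝ := 100 * (1 - ε - k) with hb₁def
  set b₂ : ℝ := δ - 100 * δ₁ with hb₂def
  clear_value b₁ b₂
  have hφ : 0 < k * r + b₁ := by positivity
  have hψ : 0 < δ₁ * r + b₂ := by positivity
  have hφ' := hφ.ne'
  have hψ' := hψ.ne'
  -- numerators
  have hN1 : 0 ≤ ((m:ℝ) - 1) * (1 - k ^ 2) * (δ₁ * r + b₂) -
      ((n:ℝ) + 2) * k * δ₁ * (k * r + b₁) := by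
    have t1 : 0 ≤ (((m:ℝ) - 1) * (1 - k ^ 2) - ((n:ℝ) + 2) * k ^ 2) * δ₁ * r := by
      apply mul_nonneg (mul_nonneg (by linarith) hδ₁0.le) hr.le
    have t2 : ((m:ℝ) - 1) * (1 - k ^ 2) * (δ / 2) ≤ ((m:ℝ) - 1) * (1 - k ^ 2) * b₂ :=
      mul_le_mul_of_nonneg_left hb2' hA
    have t3 : 0 ≤ ((m:ℝ) - 1) * (1 - k ^ 2) * δ := mul_nonneg hA hδ.le
    linarith [h3']
  have hnn1 : (n:ℝ) + 1 ≤ (m:ℝ) + n + 1 := by linarith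
  have hc2 : (m:ℝ) * k * δ₁ * b₂ ≤ b₁ / 4 := by
    have q1 : 0 ≤ (1 - k) * ((m:ℝ) * δ₁ * b₂) :=
      mul_nonneg (by linarith) (mul_nonneg (mul_nonneg (by linarith) hδ₁0.le) hb₂.le)
    have q2 : 0 ≤ (m:ℝ) * δ₁ * (δ - b₂) :=
      mul_nonneg (mul_nonneg (by linarith) hδ₁0.le) (by rw [hb₂def]; linarith)
    nlinarith [h4', q1, q2]
  have hN2 : 0 ≤ (((n:ℝ) - 1) - ((n:ℝ) + 1) * δ₁ ^ 2) * (k * r + b₁) -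
      (m:ℝ) * k * δ₁ * (δ₁ * r + b₂) := by
    have hco : 0 ≤ k * (((n:ℝ) - 1) - ((m:ℝ) + n + 1) * δ₁ ^ 2) :=
      mul_nonneg hk0.le (by linarith)
    have t1 : 0 ≤ k * (((n:ℝ) - 1) - ((m:ℝ) + n + 1) * δ₁ ^ 2) * r :=
      mul_nonneg hco hr.le
    have hfac : (1:ℝ) / 2 ≤ ((n:ℝ) - 1) - ((n:ℝ) + 1) * δ₁ ^ 2 := by
      have tm : (0:ℝ) ≤ (m:ℝ) * δ₁ ^ 2 := by positivity
      linarith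
    have t2 : (1 / 2) * b₁ ≤ (((n:ℝ) - 1) - ((n:ℝ) + 1) * δ₁ ^ 2) * b₁ :=
      mul_le_mul_of_nonneg_right hfac hb₁.le
    linarith
  have hN3 : 0 ≤ (1 - ((n:ℝ) + 1) * δ₁ ^ 2) * (k * r + b₁) -
      (m:ℝ) * k * δ₁ * (δ₁ * r + b₂) := by
    have hco : 0 ≤ k * (1 - ((m:ℝ) + n + 1) * δ₁ ^ 2) :=
      mul_nonneg hk0.le (by linarith)
    have t1 : 0 ≤ k * (1 - ((m:ℝ) + n + 1) * δ₁ ^ 2) * r := mul_nonneg hco hr.le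
    have hfac : (1:ℝ) / 2 ≤ 1 - ((n:ℝ) + 1) * δ₁ ^ 2 := by
      have tm : (0:ℝ) ≤ (m:ℝ) * δ₁ ^ 2 := by positivity
      linarith
    have t2 : (1 / 2) * b₁ ≤ (1 - ((n:ℝ) + 1) * δ₁ ^ 2) * b₁ :=
      mul_le_mul_of_nonneg_right hfac hb₁.le
    linarith
  refine ⟨?_, ?_, ?_, ?_⟩
  · simp only [Ric00, deriv2_affine]
    norm_num
  · have key : (((m:ℝ) - 1) * (1 - k ^ 2) * (δ₁ * r + b₂) -
        ((n:ℝ) + 2) * k * δ₁ * (k * r + b₁)) / ((k * r + b₁) ^ 2 * (δ₁ * r + b₂)) =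
        Ric11 m n (fun t => k * t + b₁) (fun t => δ₁ * t + b₂) (fun t => δ₁ * t + b₂) r := by
      simp only [Ric11, deriv_affine, deriv2_affine, deriv_const]
      field_simp
      ring
    rw [← key]
    exact div_nonneg hN1 (by positivity)
  · have key : ((((n:ℝ) - 1) - ((n:ℝ) + 1) * δ₁ ^ 2) * (k * r + b₁) -
        (m:ℝ) * k * δ₁ * (δ₁ * r + b₂)) / ((k * r + b₁) * (δ₁ * r + b₂) ^ 2) =
        Ric22 m n (fun t => k * t + b₁) (fun t => δ₁ * t + b₂) (fun t => δ₁ * t + b₂) r := by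
      simp only [Ric22, deriv_affine, deriv2_affine, deriv_const]
      field_simp
      ring
    rw [← key]
    exact div_nonneg hN2 (by positivity)
  · have key : ((1 - ((n:ℝ) + 1) * δ₁ ^ 2) * (k * r + b₁) -
        (m:ℝ) * k * δ₁ * (δ₁ * r + b₂)) / ((k * r + b₁) * (δ₁ * r + b₂) ^ 2) =
        Ric33 m n (fun t => k * t + b₁) (fun t => δ₁ * t + b₂) (fun t => δ₁ * t + b₂) r := by
      simp only [Ric33, deriv_affine, deriv2_affine, deriv_const]
      field_simp
      ring
    rw [← key]
    exact div_nonneg hN3 (by positivity)
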